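/- Every countable group Γ admits a free action on the Cantor set, i.e. there exists a group homomorphism α : Γ → Homeo(X), where X is the Cantor set, such that for every s ∈ Γ∖{e} the homeomorphism α_s has no fixed point. -/

import Mathlib

open TopologicalSpace

/-- The group structure on the homeomorphism group of `X`,
with `(f * g) x = f (g x)`. -/
instance homeoGroup (X : Type*) [TopologicalSpace X] : Group (X ≃ₜ X) where
  mul f g := g.trans f
  one := Homeomorph.refl X
  inv := Homeomorph.symm
  mul_assoc _ _ _ := Homeomorph.ext fun _ => rfl
  one_mul _ := Homeomorph.ext fun _ => rfl
  mul_one _ := Homeomorph.ext fun _ => rfl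
  inv_mul_cancel f := Homeomorph.ext fun x => f.symm_apply_apply x

/-- The topology on `Homeo(X)` of uniform convergence of a homeomorphism together with
its inverse: for a compact metrizable space `X` the compact-open topology on `C(X, X)`
is the topology of uniform convergence, and we pull back the product topology along
`φ ↦ (φ, φ⁻¹)`. -/
instance homeoTopology (X : Type*) [TopologicalSpace X] : TopologicalSpace (X ≃ₜ X) :=
  TopologicalSpace.induced
    (fun φ : X ≃ₜ X => ((φ : C(X, X)), (φ.symm : C(X, X)))) inferInstance

/-- The space `S(Γ, X)` of actions of `Γ` on `X`, topologized as a subspace of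
the product space `∏_Γ Homeo(X)`. -/
instance actionSpaceTopology (Γ X : Type*) [Group Γ] [TopologicalSpace X] :
    TopologicalSpace (Γ →* (X ≃ₜ X)) :=
  TopologicalSpace.induced (fun α : Γ →* (X ≃ₜ X) => (α : Γ → X ≃ₜ X)) inferInstance


/-! ### Auxiliary development: Brouwer's characterization of the Cantor space,
and construction of a free action of a countable group on an explicit Cantor-like space. -/

set_option linter.unusedSectionVars false

namespace FreeCantor

section Brouwer

variable {X : Type*} [MetricSpace X] [CompactSpace X] [TotallyDisconnectedSpace X]

/-- Union of a list of sets. -/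
def LU : List (Set X) → Set X
  | [] => ∅
  | A :: L => A ∪ LU L

lemma mem_LU {L : List (Set X)} {x : X} : x ∈ LU L ↔ ∃ A ∈ L, x ∈ A := by
  induction L with
  | nil => simp [LU]
  | cons A L ih => simp [LU, ih]

lemma LU_isClopen {L : List (Set X)} (h : ∀ A ∈ L, IsClopen A) : IsClopen (LU L) := by
  induction L with
  | nil => simpa [LU] using isClopen_empty
  | cons A L ih =>
    exact (h A (by simp)).union (ih fun B hB => h B (by simp [hB]))

lemma LU_subset {L : List (Set X)} {C : Set X} (h : ∀ A ∈ L, A ⊆ C) : LU L ⊆ C := by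
  intro x hx
  obtain ⟨A, hA, hxA⟩ := mem_LU.1 hx
  exact h A hA hxA

/-- Disjointification of a finite list of clopen sets. -/
lemma disjointify (L : List (Set X)) (h : ∀ A ∈ L, IsClopen A) :
    ∃ M : List (Set X),
      (∀ B ∈ M, IsClopen B ∧ B.Nonempty ∧ ∃ A ∈ L, B ⊆ A) ∧
      M.Pairwise Disjoint ∧ LU M = LU L := by
  induction L with
  | nil => exact ⟨[], by simp, by simp, rfl⟩
  | cons A L ih =>
    obtain ⟨M, hM1, hM2, hM3⟩ := ih fun B hB => h B (by simp [hB])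
    have hAc : IsClopen A := h A (by simp)
    have hLc : IsClopen (LU L) := LU_isClopen fun B hB => h B (by simp [hB])
    set A' : Set X := A \ LU L with hA'
    have hA'c : IsClopen A' := hAc.diff hLc
    have hA'disj : ∀ B ∈ M, Disjoint A' B := by
      intro B hB
      have hBsub : B ⊆ LU L := by
        intro x hx; rw [← hM3]; exact mem_LU.2 ⟨B, hB, hx⟩
      exact Set.disjoint_of_subset_right hBsub (Set.disjoint_sdiff_left)
    have hunion : A' ∪ LU M = LU (A :: L) := by
      rw [hM3, LU]
      ext x
      simp only [hA', Set.mem_union, Set.mem_diff]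
      tauto
    by_cases hne : A'.Nonempty
    · refine ⟨A' :: M, ?_, ?_, ?_⟩
      · intro B hB
        rcases List.mem_cons.1 hB with rfl | hB
        · exact ⟨hA'c, hne, A, by simp, Set.diff_subset⟩
        · obtain ⟨h1, h2, C, hC, h3⟩ := hM1 B hB
          exact ⟨h1, h2, C, by simp [hC], h3⟩
      · exact List.pairwise_cons.2 ⟨hA'disj, hM2⟩
      · rw [LU, hunion]
    · refine ⟨M, ?_, hM2, ?_⟩
      · intro B hB
        obtain ⟨h1, h2, C, hC, h3⟩ := hM1 B hB
        exact ⟨h1, h2, C, by simp [hC], h3⟩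
      · rw [← hunion, Set.not_nonempty_iff_eq_empty.1 hne, Set.empty_union]

/-- Every nonempty clopen set in a compact t.d. metric space admits a finite partition into
nonempty clopen pieces of small diameter. -/
lemma exists_clopen_partition {C : Set X} (hC : IsClopen C) {ε : ENNReal} (hε : 0 < ε) :
    ∃ L : List (Set X),
      (∀ A ∈ L, IsClopen A ∧ A.Nonempty ∧ EMetric.diam A ≤ ε) ∧
      L.Pairwise Disjoint ∧ LU L = C := by
  -- cover C by small clopen sets
  have hcov : ∀ x ∈ C, ∃ V : Set X, IsClopen V ∧ x ∈ V ∧ V ⊆ EMetric.ball x (ε / 2) := by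
    intro x _
    exact compact_exists_isClopen_in_isOpen EMetric.isOpen_ball
      (EMetric.mem_ball_self (ENNReal.div_pos hε.ne' (by norm_num)))
  choose! V hV1 hV2 hV3 using hcov
  have hCc : IsCompact C := hC.1.isCompact
  obtain ⟨t, ht⟩ := hCc.elim_finite_subcover (fun x : C => V x)
    (fun x => (hV1 x x.2).2) (fun x hx => Set.mem_iUnion.2 ⟨⟨x, hx⟩, hV2 x hx⟩)
  -- the list of sets C ∩ V x, x ∈ t
  classical
  set L0 : List (Set X) := (t.image (fun x : C => C ∩ V ↑x)).toList with hL0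
  have hmem : ∀ A : Set X, A ∈ L0 ↔ ∃ x ∈ t, C ∩ V ↑x = A := by
    intro A
    simp [hL0, Finset.mem_toList, Finset.mem_image]
  have hL0c : ∀ A ∈ L0, IsClopen A := by
    intro A hA
    obtain ⟨x, _, rfl⟩ := (hmem A).1 hA
    exact hC.inter (hV1 x x.2)
  obtain ⟨M, hM1, hM2, hM3⟩ := disjointify L0 hL0c
  refine ⟨M, ?_, hM2, ?_⟩
  · intro B hB
    obtain ⟨h1, h2, A, hA, h3⟩ := hM1 B hB
    refine ⟨h1, h2, ?_⟩
    obtain ⟨x, _, rfl⟩ := (hmem A).1 hA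
    calc EMetric.diam B ≤ EMetric.diam (EMetric.ball (x : X) (ε / 2)) :=
          EMetric.diam_mono (h3.trans ((Set.inter_subset_right).trans (hV3 x x.2)))
      _ ≤ 2 * (ε / 2) := EMetric.diam_ball
      _ ≤ ε := by
          rcases eq_or_ne ε ⊤ with rfl | hne
          · simp
          · rw [ENNReal.mul_div_cancel' (by norm_num) (by norm_num)]
  · rw [hM3]
    apply Set.Subset.antisymm
    · exact LU_subset (by
        intro A hA
        obtain ⟨x, _, rfl⟩ := (hmem A).1 hA
        exact Set.inter_subset_left)
    · intro x hx
      have := ht hx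
      simp only [Set.mem_iUnion] at this
      obtain ⟨y, hy, hxy⟩ := this
      exact mem_LU.2 ⟨C ∩ V ↑y, (hmem _).2 ⟨y, hy, rfl⟩, hx, hxy⟩

/-- Splitting a nonempty clopen set into two nonempty clopen pieces (using perfectness). -/
lemma exists_clopen_split [PerfectSpace X] {C : Set X} (hC : IsClopen C) (hne : C.Nonempty) :
    ∃ A B : Set X, IsClopen A ∧ IsClopen B ∧ A.Nonempty ∧ B.Nonempty ∧
      Disjoint A B ∧ A ∪ B = C := by
  obtain ⟨x, hx⟩ := hne
  have h1 : C ∈ nhds x := hC.2.mem_nhds hx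
  have h2 : (C \ {x}).Nonempty := by
    have : C \ {x} ∈ nhdsWithin x {x}ᶜ := by
      rw [mem_nhdsWithin_iff_exists_mem_nhds_inter]
      exact ⟨C, h1, fun y hy => ⟨hy.1, hy.2⟩⟩
    exact Filter.nonempty_of_mem this
  obtain ⟨y, hyC, hyx⟩ := h2
  obtain ⟨U, hU, hxU, hyU⟩ := exists_isClopen_of_totally_separated (Ne.symm hyx)
  refine ⟨C ∩ U, C \ U, hC.inter hU, hC.diff hU, ⟨x, hx, hxU⟩, ⟨y, hyC, hyU⟩, ?_, ?_⟩
  · exact Set.disjoint_of_subset_left Set.inter_subset_right Set.disjoint_sdiff_right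
  · ext z; simp only [Set.mem_union, Set.mem_inter_iff, Set.mem_diff]; tauto


/-- Validity of a state of the construction: a list of pairwise disjoint nonempty clopen
sets each of diameter at most `n⁻¹`. -/
def Valid (σ : List (Set X) × ℕ) : Prop :=
  σ.1 ≠ [] ∧ (∀ A ∈ σ.1, IsClopen A ∧ A.Nonempty ∧ EMetric.diam A ≤ ((σ.2 : ENNReal))⁻¹) ∧
    σ.1.Pairwise Disjoint

lemma LU_disjoint_of_forall {C : Set X} {L : List (Set X)} (h : ∀ B ∈ L, Disjoint C B) :
    Disjoint C (LU L) := by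
  rw [Set.disjoint_left]
  intro x hxC hxL
  obtain ⟨B, hB, hxB⟩ := mem_LU.1 hxL
  exact (Set.disjoint_left.1 (h B hB)) hxC hxB

lemma LU_nonempty {L : List (Set X)} (hne : L ≠ [])
    (h : ∀ A ∈ L, A.Nonempty) : (LU L).Nonempty := by
  cases L with
  | nil => exact absurd rfl hne
  | cons A L =>
    obtain ⟨x, hx⟩ := h A (by simp)
    exact ⟨x, Set.mem_union_left _ hx⟩

variable [PerfectSpace X]

lemma step_spec (σ : List (Set X) × ℕ) (hσ : Valid σ) :
    ∃ τ : Bool → List (Set X) × ℕ,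
      (∀ b, Valid (τ b)) ∧
      LU (τ false).1 ∪ LU (τ true).1 = LU σ.1 ∧
      Disjoint (LU (τ false).1) (LU (τ true).1) ∧
      (∀ b, σ.2 ≤ (τ b).2) ∧
      (σ.1.length = 1 → ∀ b, σ.2 + 1 ≤ (τ b).2) ∧
      (τ false).1.length = 1 ∧
      (2 ≤ σ.1.length → (τ true).1.length = σ.1.length - 1) := by
  obtain ⟨hne, hprops, hdisj⟩ := hσ
  obtain ⟨L, n⟩ := σ
  match L, hne with
  | C :: C2 :: rest, _ =>
    refine ⟨fun b => if b then (C2 :: rest, n) else ([C], n), ?_, ?_, ?_, ?_, ?_, ?_, ?_⟩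
    · intro b
      cases b <;>
        exact ⟨by simp, fun A hA => hprops A (by simp at hA ⊢; tauto),
          by simp at hdisj ⊢ <;> tauto⟩
    · simp only [if_true, if_false, Bool.false_eq_true, LU]
      rw [Set.union_assoc]
      simp [LU]
    · simp only [if_true, if_false, Bool.false_eq_true, LU]
      rw [Set.union_empty]
      show Disjoint C (LU (C2 :: rest))
      apply LU_disjoint_of_forall
      intro B hB
      exact (List.pairwise_cons.1 hdisj).1 B hB
    · intro b; cases b <;> simp
    · intro h; simp at h
    · simp
    · intro _; simp
  | [C], _ =>
    have hC : IsClopen C := (hprops C (by simp)).1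
    have hCne : C.Nonempty := (hprops C (by simp)).2.1
    have hpos : (0 : ENNReal) < ((n + 1 : ℕ) : ENNReal)⁻¹ := by
      simp [ENNReal.inv_pos]
    obtain ⟨P, hP1, hP2, hP3⟩ := exists_clopen_partition hC hpos
    match P, hP1, hP2, hP3 with
    | [], _, _, hP3 =>
      exfalso
      obtain ⟨x, hx⟩ := hCne
      rw [← hP3] at hx
      simp [LU] at hx
    | [D], hP1, _, hP3 =>
      have hDC : D = C := by
        simpa [LU, Set.union_empty] using hP3
      have hdiam : EMetric.diam C ≤ ((n + 1 : ℕ) : ENNReal)⁻¹ := by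
        rw [← hDC]; exact (hP1 D (by simp)).2.2
      obtain ⟨A₀, B₀, hA₀, hB₀, hA₀ne, hB₀ne, hABd, hABu⟩ := exists_clopen_split hC hCne
      refine ⟨fun b => if b then ([B₀], n + 1) else ([A₀], n + 1), ?_, ?_, ?_, ?_, ?_, ?_, ?_⟩
      · intro b
        have hsub : ∀ E : Set X, E ⊆ C → EMetric.diam E ≤ ((n+1 : ℕ) : ENNReal)⁻¹ :=
          fun E hE => (EMetric.diam_mono hE).trans hdiam
        cases b
        · exact ⟨by simp, by
            intro A' hA'
            simp at hA'
            subst hA'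
            exact ⟨hA₀, hA₀ne, by
              exact_mod_cast hsub _ (hABu ▸ Set.subset_union_left)⟩, by simp⟩
        · exact ⟨by simp, by
            intro B' hB'
            simp at hB'
            subst hB'
            exact ⟨hB₀, hB₀ne, by
              exact_mod_cast hsub _ (hABu ▸ Set.subset_union_right)⟩, by simp⟩
      · simp only [if_true, if_false, Bool.false_eq_true, LU]
        rw [Set.union_empty, Set.union_empty, hABu]
        simp [LU]
      · simp only [if_true, if_false, Bool.false_eq_true, LU]
        rw [Set.union_empty, Set.union_empty]
        exact hABd
      · intro b; cases b <;> simp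
      · intro _ b; cases b <;> simp
      · simp
      · intro h; simp at h
    | D :: E :: P', hP1, hP2, hP3 =>
      refine ⟨fun b => if b then (E :: P', n + 1) else ([D], n + 1), ?_, ?_, ?_, ?_, ?_, ?_, ?_⟩
      · intro b
        cases b
        · refine ⟨by simp, ?_, by simp⟩
          intro A hA
          simp at hA
          subst hA
          have := hP1 A (by simp)
          exact ⟨this.1, this.2.1, by exact_mod_cast this.2.2⟩
        · refine ⟨by simp, ?_, ?_⟩
          · intro A hA
            simp at hA
            have hA' : A ∈ D :: E :: P' := by
              simp only [List.mem_cons]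
              tauto
            have := hP1 A hA'
            exact ⟨this.1, this.2.1, by exact_mod_cast this.2.2⟩
          · exact (List.pairwise_cons.1 hP2).2
      · simp only [if_true, if_false, LU]
        rw [Set.union_empty, ← hP3]
        simp [LU]
      · simp only [if_true, if_false, Bool.false_eq_true, LU]
        rw [Set.union_empty]
        show Disjoint D (LU (E :: P'))
        apply LU_disjoint_of_forall
        intro B hB
        exact (List.pairwise_cons.1 hP2).1 B hB
      · intro b; cases b <;> simp
      · intro _ b; cases b <;> simp
      · simp
      · intro h; simp at h


/-- One step of the construction. -/
noncomputable def step (b : Bool) (σ : {p : List (Set X) × ℕ // Valid p}) :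
    {p : List (Set X) × ℕ // Valid p} :=
  ⟨Classical.choose (step_spec σ.1 σ.2) b, (Classical.choose_spec (step_spec σ.1 σ.2)).1 b⟩

lemma step_union (σ : {p : List (Set X) × ℕ // Valid p}) :
    LU (step (X := X) false σ).1.1 ∪ LU (step true σ).1.1 = LU σ.1.1 :=
  (Classical.choose_spec (step_spec σ.1 σ.2)).2.1

lemma step_disjoint (σ : {p : List (Set X) × ℕ // Valid p}) :
    Disjoint (LU (step (X := X) false σ).1.1) (LU (step true σ).1.1) :=
  (Classical.choose_spec (step_spec σ.1 σ.2)).2.2.1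

lemma step_prec_le (b : Bool) (σ : {p : List (Set X) × ℕ // Valid p}) :
    σ.1.2 ≤ ((step (X := X) b σ)).1.2 :=
  (Classical.choose_spec (step_spec σ.1 σ.2)).2.2.2.1 b

lemma step_prec_succ (b : Bool) (σ : {p : List (Set X) × ℕ // Valid p})
    (h : σ.1.1.length = 1) : σ.1.2 + 1 ≤ ((step (X := X) b σ)).1.2 :=
  (Classical.choose_spec (step_spec σ.1 σ.2)).2.2.2.2.1 h b

lemma step_false_len (σ : {p : List (Set X) × ℕ // Valid p}) :
    ((step (X := X) false σ)).1.1.length = 1 :=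
  (Classical.choose_spec (step_spec σ.1 σ.2)).2.2.2.2.2.1

lemma step_true_len (σ : {p : List (Set X) × ℕ // Valid p}) (h : 2 ≤ σ.1.1.length) :
    ((step (X := X) true σ)).1.1.length = σ.1.1.length - 1 :=
  (Classical.choose_spec (step_spec σ.1 σ.2)).2.2.2.2.2.2 h

lemma step_subset (b : Bool) (σ : {p : List (Set X) × ℕ // Valid p}) :
    LU ((step (X := X) b σ)).1.1 ⊆ LU σ.1.1 := by
  rw [← step_union σ]
  cases b
  · exact Set.subset_union_left
  · exact Set.subset_union_right

variable [Nonempty X]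

lemma init_valid : Valid (X := X) ([Set.univ], 0) := by
  refine ⟨by simp, ?_, by simp⟩
  intro A hA
  simp at hA
  subst hA
  simp [isClopen_univ, Set.univ_nonempty]

/-- The chain of states along a branch `ω`. -/
noncomputable def chain (ω : ℕ → Bool) : ℕ → {p : List (Set X) × ℕ // Valid p}
  | 0 => ⟨([Set.univ], 0), init_valid⟩
  | (k + 1) => step (ω k) (chain ω k)

lemma chain_succ (ω : ℕ → Bool) (k : ℕ) :
    chain (X := X) ω (k + 1) = step (ω k) (chain (X := X) ω k) := by
  rw [chain]

/-- The set at stage `k` along branch `ω`. -/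
noncomputable def sets (ω : ℕ → Bool) (k : ℕ) : Set X := LU (chain (X := X) ω k).1.1

lemma sets_zero (ω : ℕ → Bool) : sets (X := X) ω 0 = Set.univ := by
  simp [sets, chain, LU]

lemma sets_succ_subset (ω : ℕ → Bool) (k : ℕ) : sets (X := X) ω (k + 1) ⊆ sets (X := X) ω k :=
  step_subset _ _

lemma sets_mono (ω : ℕ → Bool) {k m : ℕ} (h : k ≤ m) : sets (X := X) ω m ⊆ sets (X := X) ω k := by
  induction m with
  | zero => simp_all
  | succ m ih =>
    rcases Nat.lt_or_ge k (m + 1) with h' | h'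
    · exact (sets_succ_subset ω m).trans (ih (Nat.lt_succ_iff.1 h'))
    · have : k = m + 1 := le_antisymm h h'
      subst this
      exact subset_rfl

lemma sets_isClopen (ω : ℕ → Bool) (k : ℕ) : IsClopen (sets (X := X) ω k) :=
  LU_isClopen fun A hA => ((chain (X := X) ω k).2.2.1 A hA).1

lemma sets_nonempty (ω : ℕ → Bool) (k : ℕ) : (sets (X := X) ω k).Nonempty :=
  LU_nonempty (chain (X := X) ω k).2.1 fun A hA => ((chain (X := X) ω k).2.2.1 A hA).2.1

lemma chain_congr {ω ω' : ℕ → Bool} (k : ℕ) (h : ∀ i < k, ω i = ω' i) :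
    chain (X := X) ω k = chain (X := X) ω' k := by
  induction k with
  | zero => rfl
  | succ k ih =>
    rw [chain_succ, chain_succ, ih fun i hi => h i (hi.trans (Nat.lt_succ_self k)),
      h k (Nat.lt_succ_self k)]

lemma prec_mono (ω : ℕ → Bool) {k m : ℕ} (h : k ≤ m) :
    (chain (X := X) ω k).1.2 ≤ (chain (X := X) ω m).1.2 := by
  induction m with
  | zero => simp_all
  | succ m ih =>
    rcases Nat.lt_or_ge k (m + 1) with h' | h'
    · refine (ih (Nat.lt_succ_iff.1 h')).trans ?_
      rw [chain_succ]
      exact step_prec_le (ω m) (chain (X := X) ω m)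
    · have : k = m + 1 := le_antisymm h h'
      subst this
      exact le_rfl

lemma reach_one (ω : ℕ → Bool) :
    ∀ n k, (chain (X := X) ω k).1.1.length ≤ n → ∃ k' ≥ k, (chain (X := X) ω k').1.1.length = 1 := by
  intro n
  induction n with
  | zero =>
    intro k hk
    exact absurd hk (by
      have := (chain (X := X) ω k).2.1
      have : 1 ≤ (chain (X := X) ω k).1.1.length := by
        cases h : (chain (X := X) ω k).1.1 with
        | nil => exact absurd h (chain (X := X) ω k).2.1
        | cons a l => simp [h]
      omega)
  | succ n ih =>
    intro k hk
    rcases Nat.lt_or_ge (chain (X := X) ω k).1.1.length 2 with h2 | h2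
    · have h1 : (chain (X := X) ω k).1.1.length = 1 := by
        have : 1 ≤ (chain (X := X) ω k).1.1.length := by
          cases h : (chain (X := X) ω k).1.1 with
          | nil => exact absurd h (chain (X := X) ω k).2.1
          | cons a l => simp [h]
        omega
      exact ⟨k, le_rfl, h1⟩
    · cases hb : ω k with
      | false =>
        refine ⟨k + 1, Nat.le_succ k, ?_⟩
        rw [chain_succ, hb]
        exact step_false_len _
      | true =>
        have hlen : (chain (X := X) ω (k + 1)).1.1.length ≤ n := by
          rw [chain_succ, hb, step_true_len _ h2]
          omega
        obtain ⟨k', hk', h1⟩ := ih (k + 1) hlen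
        exact ⟨k', (Nat.le_succ k).trans hk', h1⟩

lemma prec_unbounded (ω : ℕ → Bool) : ∀ m, ∃ k, m ≤ (chain (X := X) ω k).1.2 := by
  intro m
  induction m with
  | zero => exact ⟨0, Nat.zero_le _⟩
  | succ m ih =>
    obtain ⟨k, hk⟩ := ih
    obtain ⟨k', hk', h1⟩ := reach_one ω (chain (X := X) ω k).1.1.length k le_rfl
    have h3 : m ≤ (chain (X := X) ω k').1.2 := hk.trans (prec_mono ω hk')
    refine ⟨k' + 1, ?_⟩
    have := step_prec_succ (ω k') (chain (X := X) ω k') h1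
    rw [chain_succ]
    omega

lemma diam_of_len_one (ω : ℕ → Bool) (k : ℕ) (h : (chain (X := X) ω k).1.1.length = 1) :
    EMetric.diam (sets (X := X) ω k) ≤ (((chain (X := X) ω k).1.2 : ENNReal))⁻¹ := by
  obtain ⟨C, hC⟩ := List.length_eq_one_iff.1 h
  have : sets (X := X) ω k = C := by simp [sets, hC, LU]
  rw [this]
  have := ((chain (X := X) ω k).2.2.1 C (by rw [hC]; simp))
  exact this.2.2

lemma exists_small (ω : ℕ → Bool) (m : ℕ) :
    ∃ k, EMetric.diam (sets (X := X) ω k) ≤ ((m : ENNReal))⁻¹ := by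
  obtain ⟨k, hk⟩ := prec_unbounded (X := X) ω m
  obtain ⟨k', hk', h1⟩ := reach_one ω (chain (X := X) ω k).1.1.length k le_rfl
  refine ⟨k', (diam_of_len_one ω k' h1).trans ?_⟩
  exact ENNReal.inv_le_inv' (by exact_mod_cast Nat.cast_le.2 (hk.trans (prec_mono ω hk')))


lemma inter_nonempty (ω : ℕ → Bool) : (⋂ k, sets (X := X) ω k).Nonempty :=
  IsCompact.nonempty_iInter_of_sequence_nonempty_isCompact_isClosed _
    (sets_succ_subset ω) (sets_nonempty ω)
    ((sets_isClopen ω 0).1.isCompact) (fun k => (sets_isClopen ω k).1)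

lemma inter_subsingleton (ω : ℕ → Bool) {x y : X}
    (hx : x ∈ ⋂ k, sets (X := X) ω k) (hy : y ∈ ⋂ k, sets (X := X) ω k) : x = y := by
  by_contra hne
  have hd : edist x y ≠ 0 := by simpa using hne
  obtain ⟨m, hm⟩ := ENNReal.exists_inv_nat_lt hd
  obtain ⟨k, hk⟩ := exists_small (X := X) ω m
  have h1 : edist x y ≤ EMetric.diam (sets (X := X) ω k) :=
    EMetric.edist_le_diam_of_mem (Set.mem_iInter.1 hx k) (Set.mem_iInter.1 hy k)
  exact absurd (h1.trans hk) (not_le.2 hm)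

/-- The point of `X` coded by a branch `ω`. -/
noncomputable def pt (ω : ℕ → Bool) : X := (inter_nonempty ω).some

lemma pt_mem (ω : ℕ → Bool) (k : ℕ) : pt (X := X) ω ∈ sets ω k :=
  Set.mem_iInter.1 (inter_nonempty ω).some_mem k

lemma pt_eq (ω : ℕ → Bool) {x : X} (hx : ∀ k, x ∈ sets (X := X) ω k) : pt ω = x :=
  inter_subsingleton ω (inter_nonempty ω).some_mem (Set.mem_iInter.2 hx)

lemma pt_injective : Function.Injective (pt (X := X)) := by
  intro ω ω' h
  by_contra hne
  have hex : ∃ n, ω n ≠ ω' n := by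
    by_contra hc
    push_neg at hc
    exact hne (funext hc)
  classical
  set k := Nat.find hex with hk
  have hkk : ω k ≠ ω' k := Nat.find_spec hex
  have hlt : ∀ i < k, ω i = ω' i := fun i hi => not_not.1 (Nat.find_min hex hi)
  have hch : chain (X := X) ω k = chain (X := X) ω' k := chain_congr k hlt
  -- the two children are disjoint
  have h1 : pt (X := X) ω ∈ sets ω (k + 1) := pt_mem ω (k + 1)
  have h2 : pt (X := X) ω' ∈ sets ω' (k + 1) := pt_mem ω' (k + 1)
  rw [sets, chain_succ] at h1 h2
  rw [hch] at h1
  have hdis := step_disjoint (chain (X := X) ω' k)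
  cases hω : ω k with
  | false =>
    have hω' : ω' k = true := by
      cases hω'' : ω' k
      · rw [hω, hω''] at hkk; exact absurd rfl hkk
      · rfl
    rw [hω] at h1; rw [hω'] at h2
    rw [h] at h1
    exact Set.disjoint_left.1 hdis h1 h2
  | true =>
    have hω' : ω' k = false := by
      cases hω'' : ω' k
      · rfl
      · rw [hω, hω''] at hkk; exact absurd rfl hkk
    rw [hω] at h1; rw [hω'] at h2
    rw [h] at h1
    exact Set.disjoint_left.1 hdis h2 h1

attribute [local instance] Classical.propDecidable

/-- The trajectory of a point `x` of `X`, following at each step the child containing `x`. -/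
noncomputable def traj (x : X) : ℕ → {p : List (Set X) × ℕ // Valid p}
  | 0 => ⟨([Set.univ], 0), init_valid⟩
  | (k + 1) =>
    step (if x ∈ LU (step false (traj x k)).1.1 then false else true) (traj x k)

/-- The branch of a point. -/
noncomputable def br (x : X) : ℕ → Bool := fun k =>
  if x ∈ LU (step false (traj x k)).1.1 then false else true

lemma chain_br (x : X) (k : ℕ) : chain (X := X) (br x) k = traj x k := by
  induction k with
  | zero => rfl
  | succ k ih => rw [chain_succ, ih, br, traj]

lemma mem_traj (x : X) (k : ℕ) : x ∈ LU (traj x k).1.1 := by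
  induction k with
  | zero => simp [traj, LU]
  | succ k ih =>
    rw [traj]
    by_cases hx : x ∈ LU (step false (traj x k)).1.1
    · rw [if_pos hx]; exact hx
    · rw [if_neg hx]
      have := step_union (traj x k)
      have hx' : x ∈ LU (step (X := X) false (traj x k)).1.1 ∪
          LU (step (X := X) true (traj x k)).1.1 := this ▸ ih
      rcases hx' with h | h
      · exact absurd h hx
      · exact h

lemma pt_surjective : Function.Surjective (pt (X := X)) := by
  intro x
  refine ⟨br x, pt_eq (br x) ?_⟩
  intro k
  rw [sets, chain_br]
  exact mem_traj x k

lemma pt_continuous : Continuous (pt (X := X)) := by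
  rw [continuous_iff_continuousAt]
  intro ω
  rw [ContinuousAt, EMetric.tendsto_nhds]
  intro ε hε
  obtain ⟨m, hm⟩ := ENNReal.exists_inv_nat_lt hε.ne'
  obtain ⟨k, hk⟩ := exists_small (X := X) ω m
  have hopen : IsOpen {ω' : ℕ → Bool | ∀ i < k, ω' i = ω i} := by
    have heq : {ω' : ℕ → Bool | ∀ i < k, ω' i = ω i} =
        ⋂ i ∈ Finset.range k, {ω' : ℕ → Bool | ω' i = ω i} := by
      ext ω'
      simp [Finset.mem_range]
    rw [heq]
    refine isOpen_biInter_finset fun i _ => ?_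
    have : {ω' : ℕ → Bool | ω' i = ω i} = (fun ω' : ℕ → Bool => ω' i) ⁻¹' {ω i} := rfl
    rw [this]
    exact IsOpen.preimage (continuous_apply i) (isOpen_discrete {ω i})
  have hmem : {ω' : ℕ → Bool | ∀ i < k, ω' i = ω i} ∈ nhds ω :=
    hopen.mem_nhds (fun i _ => rfl)
  filter_upwards [hmem] with ω' hω'
  have hch : chain (X := X) ω' k = chain (X := X) ω k := chain_congr k hω'
  have h1 : pt (X := X) ω' ∈ sets (X := X) ω k := by
    have := pt_mem (X := X) ω' k
    rwa [sets, hch] at this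
  have h2 : pt (X := X) ω ∈ sets (X := X) ω k := pt_mem (X := X) ω k
  calc edist (pt (X := X) ω') (pt (X := X) ω) ≤ EMetric.diam (sets (X := X) ω k) :=
        EMetric.edist_le_diam_of_mem h1 h2
    _ ≤ ((m : ENNReal))⁻¹ := hk
    _ < ε := hm

/-- Brouwer's theorem: a nonempty compact totally disconnected perfect metric space
is homeomorphic to the Cantor space. -/
noncomputable def brouwerHomeo : (ℕ → Bool) ≃ₜ X :=
  Continuous.homeoOfEquivCompactToT2
    (f := Equiv.ofBijective (pt (X := X)) ⟨pt_injective, pt_surjective⟩) pt_continuous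


end Brouwer

section Coloring

/-- A 3-coloring of `ZMod n` (`n ≠ 1`) with no two consecutive elements the same color. -/
lemma exists_cyclic_coloring (n : ℕ) (hn : n ≠ 1) :
    ∃ f : ZMod n → Fin 3, ∀ a, f a ≠ f (a + 1) := by
  match n, hn with
  | 0, _ =>
    have hint : ∃ f : ℤ → Fin 3, ∀ a : ℤ, f a ≠ f (a + 1) := by
      refine ⟨fun a => if Even a then 0 else 1, ?_⟩
      intro a
      show (if Even a then (0 : Fin 3) else 1) ≠ (if Even (a + 1) then (0 : Fin 3) else 1)
      have hpar : Even (a + 1) ↔ ¬ Even a := Int.even_add_one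
      by_cases h : Even a
      · rw [if_pos h, if_neg (by rw [hpar]; exact not_not.2 h)]
        decide
      · rw [if_neg h, if_pos (hpar.2 h)]
        decide
    exact hint
  | (m + 2), _ =>
    set n := m + 2 with hndef
    haveI : NeZero n := ⟨by omega⟩
    haveI : Fact (1 < n) := ⟨by omega⟩
    refine ⟨fun a => if a.val = n - 1 then 2 else ⟨a.val % 2, by omega⟩, ?_⟩
    intro a
    have hval : a.val < n := ZMod.val_lt a
    have hadd : (a + 1).val = (a.val + 1) % n := by
      rw [ZMod.val_add, ZMod.val_one]
    show (if a.val = n - 1 then (2 : Fin 3) else ⟨a.val % 2, by omega⟩) ≠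
      (if (a + 1).val = n - 1 then (2 : Fin 3) else ⟨(a + 1).val % 2, by omega⟩)
    by_cases h : a.val = n - 1
    · have h1 : (a + 1).val = 0 := by
        rw [hadd, h]
        have hsub : n - 1 + 1 = n := by omega
        rw [hsub, Nat.mod_self]
      rw [if_pos h, if_neg (by omega)]
      intro hc
      have hc' := congrArg Fin.val hc
      have e1 : ((2 : Fin 3)).val = 2 := rfl
      have e2 : ((⟨(a+1).val % 2, by omega⟩ : Fin 3)).val = (a+1).val % 2 := rfl
      rw [e1, e2] at hc'
      omega
    · have h1 : (a + 1).val = a.val + 1 := by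
        rw [hadd]
        exact Nat.mod_eq_of_lt (by omega)
      rw [if_neg h]
      by_cases h2 : a.val + 1 = n - 1
      · rw [if_pos (by omega)]
        intro hc
        have hc' := congrArg Fin.val hc
        have e1 : ((2 : Fin 3)).val = 2 := rfl
        have e2 : ((⟨a.val % 2, by omega⟩ : Fin 3)).val = a.val % 2 := rfl
        rw [e1, e2] at hc'
        omega
      · rw [if_neg (by omega)]
        intro hc
        have hc' := congrArg Fin.val hc
        have e2 : ((⟨a.val % 2, by omega⟩ : Fin 3)).val = a.val % 2 := rfl
        have e3 : ((⟨(a+1).val % 2, by omega⟩ : Fin 3)).val = (a+1).val % 2 := rfl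
        rw [e2, e3, h1] at hc'
        omega

variable {Γ : Type*} [Group Γ]

/-- For every `s ≠ 1` there is a 3-coloring of `Γ` such that `x` and `s * x` always get
different colors. -/
lemma exists_coloring (s : Γ) (hs : s ≠ 1) : ∃ c : Γ → Fin 3, ∀ x, c x ≠ c (s * x) := by
  classical
  set n := orderOf s with hn
  have hn1 : n ≠ 1 := fun h => hs (orderOf_eq_one_iff.1 h)
  obtain ⟨f, hf⟩ := exists_cyclic_coloring n hn1
  -- the orbit equivalence relation of ⟨s⟩ acting by left multiplication
  let st : Setoid Γ := ⟨fun x y => ∃ k : ℤ, s ^ k * y = x, by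
    constructor
    · intro x; exact ⟨0, by simp⟩
    · rintro x y ⟨k, rfl⟩
      exact ⟨-k, by group⟩
    · rintro x y z ⟨k, rfl⟩ ⟨l, rfl⟩
      exact ⟨k + l, by group⟩⟩
  let rep : Γ → Γ := fun x => (Quotient.mk st x).out
  have hrep : ∀ x, ∃ k : ℤ, s ^ k * rep x = x := by
    intro x
    obtain ⟨k, hk⟩ := (Quotient.mk_out (s := st) x : st.r _ x)
    refine ⟨-k, ?_⟩
    have hrx : rep x = s ^ k * x := hk.symm
    rw [hrx, ← mul_assoc, ← zpow_add, neg_add_cancel, zpow_zero, one_mul]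
  have hrep_s : ∀ x, rep (s * x) = rep x := by
    intro x
    have : (Quotient.mk st (s * x)) = Quotient.mk st x :=
      Quotient.sound ⟨1, by rw [zpow_one]⟩
    simp only [rep, this]
  set key : Γ → ℤ := fun x => Classical.choose (hrep x) with hkey
  have hkeyspec : ∀ x, s ^ key x * rep x = x := fun x => Classical.choose_spec (hrep x)
  refine ⟨fun x => f ((key x : ZMod n)), ?_⟩
  intro x
  have h1 : s ^ key (s * x) * rep x = s * x := by
    rw [← hrep_s x]; exact hkeyspec (s * x)
  have h2 : s ^ (key x + 1) * rep x = s * x := by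
    rw [add_comm, zpow_one_add, mul_assoc, hkeyspec]
  have h3 : s ^ key (s * x) = s ^ (key x + 1) := by
    have := h1.trans h2.symm
    exact mul_right_cancel this
  have h4 : ((key (s * x) : ZMod n)) = ((key x : ZMod n)) + 1 := by
    have hmod := zpow_eq_zpow_iff_modEq.1 h3
    have : ((key (s * x) : ZMod n)) = (((key x + 1 : ℤ) : ZMod n)) := by
      rw [ZMod.intCast_eq_intCast_iff]
      exact_mod_cast hmod
    rw [this]
    push_cast
    ring
  show f ((key x : ZMod n)) ≠ f ((key (s * x) : ZMod n))
  rw [h4]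
  exact hf _


end Coloring

section Action

variable (Γ : Type*) [Group Γ]

/-- The ambient product space: colorings of `Γ` indexed by nontrivial group elements,
together with a Cantor factor ensuring perfectness. -/
abbrev FullShift : Type _ := ({s : Γ // s ≠ 1} → Γ → Fin 3) × (ℕ → Bool)

/-- The subspace of families of proper colorings. -/
def FreeSet : Set (FullShift Γ) :=
  {ω | ∀ s : {s : Γ // s ≠ 1}, ∀ x : Γ, ω.1 s x ≠ ω.1 s (s.1 * x)}

variable {Γ}

/-- The right-translation action on the ambient space. -/
def Tf (g : Γ) (ω : FullShift Γ) : FullShift Γ :=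
  (fun s x => ω.1 s (x * g), ω.2)

lemma Tf_continuous (g : Γ) : Continuous (Tf (Γ := Γ) g) := by
  refine Continuous.prodMk ?_ continuous_snd
  refine continuous_pi fun s => continuous_pi fun x => ?_
  exact (continuous_apply (x * g)).comp ((continuous_apply s).comp continuous_fst)

lemma Tf_mem (g : Γ) {ω : FullShift Γ} (hω : ω ∈ FreeSet Γ) : Tf g ω ∈ FreeSet Γ := by
  intro s x
  have := hω s (x * g)
  simpa [Tf, mul_assoc] using this

lemma Tf_Tf (g h : Γ) (ω : FullShift Γ) : Tf g (Tf h ω) = Tf (g * h) ω := by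
  unfold Tf
  refine Prod.ext ?_ rfl
  funext s x
  simp [mul_assoc]

lemma Tf_one (ω : FullShift Γ) : Tf 1 ω = ω := by
  unfold Tf
  refine Prod.ext ?_ rfl
  funext s x
  simp

/-- The action homeomorphism on the subspace. -/
def act (g : Γ) : ↥(FreeSet Γ) ≃ₜ ↥(FreeSet Γ) where
  toFun ω := ⟨Tf g ω.1, Tf_mem g ω.2⟩
  invFun ω := ⟨Tf g⁻¹ ω.1, Tf_mem g⁻¹ ω.2⟩
  left_inv ω := Subtype.ext (by
    show Tf g⁻¹ (Tf g ω.1) = ω.1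
    rw [Tf_Tf, inv_mul_cancel, Tf_one])
  right_inv ω := Subtype.ext (by
    show Tf g (Tf g⁻¹ ω.1) = ω.1
    rw [Tf_Tf, mul_inv_cancel, Tf_one])
  continuous_toFun := Continuous.subtype_mk ((Tf_continuous g).comp continuous_subtype_val) _
  continuous_invFun := Continuous.subtype_mk ((Tf_continuous g⁻¹).comp continuous_subtype_val) _

/-- The action as a group homomorphism into the homeomorphism group. -/
def acthom : Γ →* (↥(FreeSet Γ) ≃ₜ ↥(FreeSet Γ)) where
  toFun := act
  map_one' := Homeomorph.ext fun ω => Subtype.ext (by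
    show Tf 1 ω.1 = ω.1
    exact Tf_one ω.1)
  map_mul' g h := Homeomorph.ext fun ω => Subtype.ext (by
    show Tf (g * h) ω.1 = Tf g (Tf h ω.1)
    rw [Tf_Tf])

lemma acthom_free (g : Γ) (hg : g ≠ 1) (ω : ↥(FreeSet Γ)) : acthom g ω ≠ ω := by
  intro hc
  have h1 : Tf g ω.1 = ω.1 := congrArg Subtype.val hc
  have h2 : ω.1.1 ⟨g, hg⟩ (1 * g) = ω.1.1 ⟨g, hg⟩ 1 := by
    conv_rhs => rw [← h1]
    rfl
  have h3 := ω.2 ⟨g, hg⟩ 1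
  rw [mul_one] at h3
  rw [one_mul] at h2
  exact h3 h2.symm

-- Instances on the subspace
lemma freeSet_isClosed : IsClosed (FreeSet Γ) := by
  have : FreeSet Γ = ⋂ (s : {s : Γ // s ≠ 1}), ⋂ (x : Γ),
      {ω : FullShift Γ | ω.1 s x ≠ ω.1 s (s.1 * x)} := by
    ext ω; simp [FreeSet]
  rw [this]
  refine isClosed_iInter fun s => isClosed_iInter fun x => ?_
  have hc : Continuous (fun ω : FullShift Γ => (ω.1 s x, ω.1 s (s.1 * x))) := by
    refine Continuous.prodMk ?_ ?_ <;>
      exact (continuous_apply _).comp ((continuous_apply s).comp continuous_fst)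
  have : {ω : FullShift Γ | ω.1 s x ≠ ω.1 s (s.1 * x)} =
      (fun ω : FullShift Γ => (ω.1 s x, ω.1 s (s.1 * x))) ⁻¹'
        {p : Fin 3 × Fin 3 | p.1 ≠ p.2} := rfl
  rw [this]
  exact IsClosed.preimage hc (isClosed_discrete _)

instance : CompactSpace ↥(FreeSet Γ) :=
  isCompact_iff_compactSpace.1 (freeSet_isClosed.isCompact)

instance : TotallyDisconnectedSpace ↥(FreeSet Γ) :=
  Subtype.totallyDisconnectedSpace

instance [Countable Γ] : MetrizableSpace ↥(FreeSet Γ) := by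
  haveI : MetrizableSpace (FullShift Γ) := by infer_instance
  infer_instance

instance : Nonempty ↥(FreeSet Γ) := by
  have h : ∀ s : {s : Γ // s ≠ 1}, ∃ c : Γ → Fin 3, ∀ x, c x ≠ c (s.1 * x) :=
    fun s => exists_coloring s.1 s.2
  choose c hc using h
  exact ⟨⟨(c, fun _ => false), fun s x => hc s x⟩⟩

instance : PerfectSpace ↥(FreeSet Γ) := by
  rw [perfectSpace_iff_forall_not_isolated]
  intro p
  -- the sequence flipping the `n`-th bit of the Cantor coordinate
  let q : ℕ → ↥(FreeSet Γ) := fun n =>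
    ⟨(p.1.1, Function.update p.1.2 n (! p.1.2 n)), fun s x => p.2 s x⟩
  have hqne : ∀ n, q n ≠ p := by
    intro n hc
    have := congrArg (fun z : ↥(FreeSet Γ) => z.1.2 n) hc
    simp only [q, Function.update_self] at this
    exact (Bool.not_ne_self (p.1.2 n)) this
  have hq : Filter.Tendsto q Filter.atTop (nhds p) := by
    rw [tendsto_subtype_rng]
    refine Filter.Tendsto.prodMk_nhds tendsto_const_nhds ?_
    rw [tendsto_pi_nhds]
    intro m
    apply tendsto_const_nhds.congr'
    filter_upwards [Filter.eventually_gt_atTop m] with n hn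
    exact (Function.update_of_ne (show m ≠ n by omega) _ _).symm
  have htv : Filter.Tendsto q Filter.atTop (nhdsWithin p {p}ᶜ) := by
    apply tendsto_nhdsWithin_of_tendsto_nhds_of_eventually_within _ hq
    filter_upwards with n
    exact hqne n
  exact htv.neBot


end Action

end FreeCantor

open FreeCantor in
/-- Every countable group `Γ` admits a free action on the Cantor set `X`:
a homomorphism `α : Γ → Homeo(X)` such that every `s ≠ e` acts without fixed points. -/
theorem exists_free_cantor_system (Γ X : Type*) [Group Γ] [Countable Γ]
    [TopologicalSpace X] [CompactSpace X] [MetrizableSpace X]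
    [TotallyDisconnectedSpace X] [PerfectSpace X] [Nonempty X] :
    ∃ α : Γ →* (X ≃ₜ X), ∀ s : Γ, s ≠ 1 → ∀ x : X, α s x ≠ x := by
  letI : MetricSpace X := TopologicalSpace.metrizableSpaceMetric X
  letI : MetricSpace ↥(FreeSet Γ) := TopologicalSpace.metrizableSpaceMetric ↥(FreeSet Γ)
  let e₁ : (ℕ → Bool) ≃ₜ X := brouwerHomeo
  let e₂ : (ℕ → Bool) ≃ₜ ↥(FreeSet Γ) := brouwerHomeo
  let E : ↥(FreeSet Γ) ≃ₜ X := e₂.symm.trans e₁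
  refine ⟨{
    toFun := fun g => (E.symm.trans (acthom g)).trans E
    map_one' := Homeomorph.ext fun x => by
      show E ((acthom (Γ := Γ) 1) (E.symm x)) = x
      rw [map_one]
      show E (E.symm x) = x
      exact E.apply_symm_apply x
    map_mul' := fun g h => Homeomorph.ext fun x => by
      show E ((acthom (g * h)) (E.symm x)) =
        E ((acthom g) (E.symm (E ((acthom h) (E.symm x)))))
      rw [E.symm_apply_apply, map_mul]
      rfl }, ?_⟩
  intro s hs x hx
  have h1 : E ((acthom s) (E.symm x)) = x := hx
  have h2 : (acthom s) (E.symm x) = E.symm x := by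
    have := congrArg E.symm h1
    rwa [E.symm_apply_apply] at this
  exact acthom_free s hs (E.symm x) h2
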